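/- Let 0 ≤ i < j ≤ n−1. If δ(i) = δ(j), then 2i + j + 4 ≤ 2n + e/2 ≤ i + 2j + 3. -/

import Mathlib

open Finset

/-- `t = s^(e/2)` as a real number. -/
noncomputable def tval (s e : ℕ) : ℝ := (s : ℝ) ^ ((e : ℝ) / 2)

/-- `δ(i) = |Δ_i|`, the number of `i`-dimensional singular subspaces of a finite
polar space of rank `n` with orders `(s, …, s, t)`, `t = s^(e/2)`. -/
noncomputable def delta (n s e : ℕ) (i : ℤ) : ℝ :=
  (∏ u ∈ Finset.Icc (0:ℤ) i, ((s:ℝ) ^ ((n:ℤ) - u - 1) * tval s e + 1)) *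
  (∏ u ∈ Finset.Icc (0:ℤ) i, ((s:ℝ) ^ ((n:ℤ) - u) - 1)) /
  (∏ u ∈ Finset.Icc (0:ℤ) i, ((s:ℝ) ^ (u + 1) - 1))

lemma prod_zpow_eq {q : ℝ} (hq : q ≠ 0) (s : Finset ℤ) (g : ℤ → ℤ) :
    ∏ u ∈ s, q ^ (g u) = q ^ (∑ u ∈ s, g u) := by
  classical
  induction s using Finset.induction_on with
  | empty => simp
  | insert x t hx ih =>
      rw [Finset.prod_insert hx, Finset.sum_insert hx, zpow_add₀ hq, ih]

lemma Icc_succ_insert (a b : ℤ) (h : a ≤ b + 1) :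
    Finset.Icc a (b+1) = insert (b+1) (Finset.Icc a b) := by
  ext x
  simp only [Finset.mem_Icc, Finset.mem_insert]
  omega

lemma sum_linear (c d i j : ℤ) (hj : i ≤ j) :
    ∑ u ∈ Finset.Icc (i+1) j, (c - 2*d*u) = (j - i)*c - d*(j+i+1)*(j-i) := by
  refine Int.le_induction (motive := fun j _ => ∑ u ∈ Finset.Icc (i+1) j, (c - 2*d*u)
    = (j - i)*c - d*(j+i+1)*(j-i)) ?_ ?_ j hj
  · show ∑ u ∈ Finset.Icc (i+1) i, (c - 2*d*u) = _
    rw [show Finset.Icc (i+1) i = ∅ from Finset.Icc_eq_empty (by omega)]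
    simp
  · intro m hm ih
    show ∑ u ∈ Finset.Icc (i+1) (m+1), (c - 2*d*u) = _
    rw [Icc_succ_insert (i+1) m (by omega),
      Finset.sum_insert (by simp only [Finset.mem_Icc]; omega), ih]
    ring

lemma prod_split (f : ℤ → ℝ) (i j : ℤ) (hi : 0 ≤ i) (hij : i ≤ j) :
    ∏ u ∈ Finset.Icc (0:ℤ) j, f u
      = (∏ u ∈ Finset.Icc (0:ℤ) i, f u) * ∏ u ∈ Finset.Icc (i+1) j, f u := by
  rw [← Finset.prod_union (by
    rw [Finset.disjoint_left]
    intro x hx hx'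
    simp only [Finset.mem_Icc] at hx hx'
    omega)]
  congr 1
  ext x
  simp only [Finset.mem_Icc, Finset.mem_union]
  omega


set_option maxHeartbeats 1600000 in
lemma key1 (q : ℝ) (hq1 : 1 < q) (hq2 : 2 ≤ q^2) (n e i j u : ℤ)
    (he0 : 0 ≤ e) (he4 : e ≤ 4) (hn : 3 ≤ n) (hi : 0 ≤ i)
    (hu1 : i + 1 ≤ u) (huj : u ≤ j) (hjn : j ≤ n - 1)
    (hX : 4*n + e ≤ 4*i + 2*j + 7) :
    (q ^ (2*(n-u-1)+e) + 1) * (q ^ (2*(n-u)) - 1)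
      < q ^ (4*n + e - 4*u - 2*i - 5) * (q ^ (2*(u+1)) - 1) := by
  have hq0 : (0:ℝ) < q := lt_trans one_pos hq1
  have hqne : q ≠ 0 := ne_of_gt hq0
  have hmono : ∀ (k : ℕ) (m : ℤ), (k:ℤ) ≤ m → (q:ℝ)^(k:ℕ) ≤ q ^ m := by
    intro k m hk
    rw [← zpow_natCast q k]
    exact zpow_le_zpow_right₀ hq1.le hk
  have ha0 : (0:ℝ) < q ^ (2*(n-u-1)+e) := zpow_pos hq0 _
  have hb0 : (0:ℝ) < q ^ (2*(n-u)) := zpow_pos hq0 _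
  have hc0 : (0:ℝ) < q ^ (2*(u+1)) := zpow_pos hq0 _
  have hw0 : (0:ℝ) < q ^ (2*(u-i)-1) := zpow_pos hq0 _
  have hcomb : q ^ (2*(u-i)-1) * q ^ (2*(n-u-1)+e) * q ^ (2*(n-u))
      = q ^ (4*n + e - 4*u - 2*i - 5) * q ^ (2*(u+1)) := by
    rw [← zpow_add₀ hqne, ← zpow_add₀ hqne, ← zpow_add₀ hqne]
    congr 1
    ring
  have ha1 : (1:ℝ) ≤ q ^ (2*(n-u-1)+e) := by
    calc (1:ℝ) = q ^ (0:ℤ) := (zpow_zero q).symm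
    _ ≤ q ^ (2*(n-u-1)+e) := zpow_le_zpow_right₀ hq1.le (by omega)
  have hb2 : q^2 ≤ q ^ (2*(n-u)) := hmono 2 _ (by omega)
  have hc4 : q^4 ≤ q ^ (2*(u+1)) := hmono 4 _ (by omega)
  have hb1 : (1:ℝ) < q ^ (2*(n-u)) := by nlinarith
  have hc1 : (1:ℝ) < q ^ (2*(u+1)) := by nlinarith
  have hpolyA : (0:ℝ) ≤ q^4 - q^3 - 1 := by
    nlinarith [sq_nonneg (q^2 - q - 1),
      mul_nonneg (by linarith : (0:ℝ) ≤ q + 1) (by linarith : (0:ℝ) ≤ q^2 - 2)]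
  suffices H : (q ^ (2*(n-u-1)+e) + 1) * (q ^ (2*(n-u)) - 1) * q ^ (2*(u+1))
      < q ^ (2*(u-i)-1) * q ^ (2*(n-u-1)+e) * q ^ (2*(n-u)) * (q ^ (2*(u+1)) - 1) by
    apply lt_of_mul_lt_mul_right _ hc0.le
    calc (q ^ (2*(n-u-1)+e) + 1) * (q ^ (2*(n-u)) - 1) * q ^ (2*(u+1))
        < q ^ (2*(u-i)-1) * q ^ (2*(n-u-1)+e) * q ^ (2*(n-u)) * (q ^ (2*(u+1)) - 1) := H
      _ = (q ^ (2*(u-i)-1) * q ^ (2*(n-u-1)+e) * q ^ (2*(n-u))) * (q ^ (2*(u+1)) - 1) := by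
          ring
      _ = (q ^ (4*n + e - 4*u - 2*i - 5) * q ^ (2*(u+1))) * (q ^ (2*(u+1)) - 1) := by
          rw [hcomb]
      _ = q ^ (4*n + e - 4*u - 2*i - 5) * (q ^ (2*(u+1)) - 1) * q ^ (2*(u+1)) := by
          ring
  by_cases hk2 : i + 2 ≤ u
  · -- Case A : second or later factor
    have hw3 : q^3 ≤ q ^ (2*(u-i)-1) := hmono 3 _ (by omega)
    have hc6 : q^6 ≤ q ^ (2*(u+1)) := hmono 6 _ (by omega)
    have hq3 : 2*q ≤ q^3 := by nlinarith
    have h8 : (8:ℝ) ≤ q^6 := by nlinarith [pow_le_pow_left₀ (by norm_num : (0:ℝ) ≤ 2) hq2 3]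
    have hy : (0:ℝ) ≤ q^6 - 2*q^3 - 1 := by nlinarith [h8, sq_nonneg (q^3 - 4)]
    have h2c : 2 * q ^ (2*(u+1)) ≤ q^3 * (q ^ (2*(u+1)) - 1) := by
      linarith [mul_le_mul_of_nonneg_right hc6 (show (0:ℝ) ≤ q^3 - 2 by linarith [hq3, hq1]),
        mul_nonneg (by positivity : (0:ℝ) ≤ q^3) hy]
    have hbc : (0:ℝ) ≤ (q ^ (2*(n-u)) - 1) * q ^ (2*(u+1)) :=
      mul_nonneg (by linarith) hc0.le
    have s1 : (q ^ (2*(n-u-1)+e) + 1) * (q ^ (2*(n-u)) - 1) * q ^ (2*(u+1))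
        ≤ (2 * q ^ (2*(n-u-1)+e)) * ((q ^ (2*(n-u)) - 1) * q ^ (2*(u+1))) := by
      linarith [mul_le_mul_of_nonneg_right
        (show q ^ (2*(n-u-1)+e) + 1 ≤ 2 * q ^ (2*(n-u-1)+e) by linarith) hbc]
    have s2 : (2 * q ^ (2*(n-u-1)+e)) * ((q ^ (2*(n-u)) - 1) * q ^ (2*(u+1)))
        < q ^ (2*(n-u-1)+e) * q ^ (2*(n-u)) * (2 * q ^ (2*(u+1))) := by
      linarith [mul_pos ha0 hc0]
    have s3 : q ^ (2*(n-u-1)+e) * q ^ (2*(n-u)) * (2 * q ^ (2*(u+1)))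
        ≤ q ^ (2*(n-u-1)+e) * q ^ (2*(n-u)) * (q^3 * (q ^ (2*(u+1)) - 1)) :=
      mul_le_mul_of_nonneg_left h2c (by positivity)
    have s4 : q ^ (2*(n-u-1)+e) * q ^ (2*(n-u)) * (q^3 * (q ^ (2*(u+1)) - 1))
        ≤ q ^ (2*(n-u-1)+e) * q ^ (2*(n-u)) * (q ^ (2*(u-i)-1) * (q ^ (2*(u+1)) - 1)) := by
      have h1 : q^3 * (q ^ (2*(u+1)) - 1) ≤ q ^ (2*(u-i)-1) * (q ^ (2*(u+1)) - 1) :=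
        mul_le_mul_of_nonneg_right hw3 (by linarith)
      exact mul_le_mul_of_nonneg_left h1 (by positivity)
    linarith [s1, s2, s3, s4]
  · -- Case B : u = i + 1, the slack factor is q
    have hu : u = i + 1 := by omega
    rw [show 2*(u-i)-1 = 1 from by omega, zpow_one]
    by_cases he2 : 2 ≤ e
    · -- B1 : e ≥ 2
      have hab : q ^ (2*(n-u)) ≤ q ^ (2*(n-u-1)+e) := zpow_le_zpow_right₀ hq1.le (by omega)
      have hcq : q ^ (2*(u+1)) ≤ q * (q ^ (2*(u+1)) - 1) := by
        linarith [mul_le_mul_of_nonneg_right hc4 (show (0:ℝ) ≤ q - 1 by linarith),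
          mul_nonneg hq0.le hpolyA]
      have s1 : (q ^ (2*(n-u-1)+e) + 1) * (q ^ (2*(n-u)) - 1)
          ≤ q ^ (2*(n-u-1)+e) * q ^ (2*(n-u)) - 1 := by linarith [hab]
      have s1c : (q ^ (2*(n-u-1)+e) + 1) * (q ^ (2*(n-u)) - 1) * q ^ (2*(u+1))
          ≤ (q ^ (2*(n-u-1)+e) * q ^ (2*(n-u)) - 1) * q ^ (2*(u+1)) :=
        mul_le_mul_of_nonneg_right s1 hc0.le
      have s2 : (q ^ (2*(n-u-1)+e) * q ^ (2*(n-u)) - 1) * q ^ (2*(u+1))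
          < q ^ (2*(n-u-1)+e) * q ^ (2*(n-u)) * q ^ (2*(u+1)) := by linarith [hc0]
      have s3 : q ^ (2*(n-u-1)+e) * q ^ (2*(n-u)) * q ^ (2*(u+1))
          ≤ q ^ (2*(n-u-1)+e) * q ^ (2*(n-u)) * (q * (q ^ (2*(u+1)) - 1)) :=
        mul_le_mul_of_nonneg_left hcq (by positivity)
      linarith [s1c, s2, s3]
    · -- B2 : e ≤ 1
      have he1 : e ≤ 1 := by omega
      by_cases hnu : n = u + 1
      · -- B2a : last possible factor, a = q^e, b = q^2, c = q^(2n) ≥ q^6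
        have hc6 : q^6 ≤ q ^ (2*(u+1)) := hmono 6 _ (by omega)
        have hbq2 : q ^ (2*(n-u)) = q^2 := by
          rw [show 2*(n-u) = ((2:ℕ):ℤ) from by omega, zpow_natCast]
        interval_cases e
        · -- e = 0
          have haq : q ^ (2*(n-u-1)+0) = 1 := by
            rw [show 2*(n-u-1)+0 = 0 from by omega, zpow_zero]
          rw [haq, hbq2]
          have hpolyB : (0:ℝ) < q^3 - 2*q^2 + 2 := by
            nlinarith [sq_nonneg (q - 1), sq_nonneg (q^2 - q - 1),
              mul_nonneg (by linarith : (0:ℝ) ≤ q - 1) (by linarith : (0:ℝ) ≤ q^2 - 2),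
              sq_nonneg (q-2), mul_pos (by linarith : (0:ℝ) < q) (by linarith : (0:ℝ) < q - 1)]
          have hpolyC : (0:ℝ) < q^6 - 2*q^5 + 2*q^3 - 1 := by
            nlinarith [sq_nonneg (q - 1), sq_nonneg (q^2 - q - 1),
              mul_nonneg (by linarith : (0:ℝ) ≤ q - 1) (by linarith : (0:ℝ) ≤ q^2 - 2),
              sq_nonneg (q^2-2),
              mul_nonneg (mul_nonneg hq0.le hq0.le) (by linarith : (0:ℝ) ≤ q^2 - 2),
              mul_nonneg (by positivity : (0:ℝ) ≤ q^3) (by linarith : (0:ℝ) ≤ q^2 - 2)]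
          linarith [mul_le_mul_of_nonneg_right hc6 hpolyB.le,
            mul_pos (by positivity : (0:ℝ) < q^3) hpolyC]
        · -- e = 1
          have haq : q ^ (2*(n-u-1)+1) = q := by
            rw [show 2*(n-u-1)+1 = 1 from by omega, zpow_one]
          rw [haq, hbq2]
          have hpolyD : (0:ℝ) < q^6 - q^5 - q^4 + q^3 + q^2 - 1 := by
            nlinarith [mul_nonneg (by positivity : (0:ℝ) ≤ q^3) (by linarith : (0:ℝ) ≤ q^2 - 2),
              mul_nonneg (by linarith : (0:ℝ) ≤ q) (by linarith : (0:ℝ) ≤ q^2 - 2),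
              sq_nonneg (q^2 - q - 1)]
          have hα : (0:ℝ) < q^4 - q^3 - q^2 + q + 1 := by
            nlinarith [sq_nonneg (q^2 - q - 1), hq1]
          linarith [mul_le_mul_of_nonneg_right hc6 hα.le,
            mul_pos (by positivity : (0:ℝ) < q^4) hpolyD]
      · -- B2bc : n ≥ u + 2
        have hnu2 : u + 2 ≤ n := by omega
        have ha2exp : (q ^ (2*(n-u-1)+e))^2 = q ^ (4*(n-u-1)+2*e) := by
          rw [sq, ← zpow_add₀ hqne]
          congr 1
          ring
        by_cases hj1 : j = i + 1
        · -- B2b : N = 1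
          interval_cases e
          · -- e = 0
            have ha2 : q^2 ≤ q ^ (2*(n-u-1)+0) := hmono 2 _ (by omega)
            have hbq : q ^ (2*(n-u)) = q ^ (2*(n-u-1)+0) * q^2 := by
              rw [← zpow_natCast q 2, ← zpow_add₀ hqne]
              congr 1
              omega
            have hca : (q ^ (2*(n-u-1)+0))^2 * q^3 ≤ q ^ (2*(u+1)) := by
              rw [ha2exp, ← zpow_natCast q 3, ← zpow_add₀ hqne]
              exact zpow_le_zpow_right₀ hq1.le (by omega)
            rw [hbq]
            set a := q ^ (2*(n-u-1)+0) with hadef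
            have hq4 : q + 1 < a * q^2 := by
              linarith [mul_le_mul_of_nonneg_right ha2 (show (0:ℝ) ≤ q^2 by positivity),
                hpolyA, mul_pos hq0 (show (0:ℝ) < q^2 - 1 by linarith)]
            have hβ1 : 1 < q^3*a^2 - (a+1)*(a*q^2-1) := by
              nlinarith [mul_pos (mul_pos ha0 (show (0:ℝ) < q - 1 by linarith))
                (show (0:ℝ) < a*q^2 - q - 1 by linarith [hq4])]
            have hβ0 : (0:ℝ) ≤ q^3*a^2 - (a+1)*(a*q^2-1) := by linarith
            have h1 : (a^2*q^3) * (q^3*a^2 - (a+1)*(a*q^2-1))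
                ≤ q ^ (2*(u+1)) * (q^3*a^2 - (a+1)*(a*q^2-1)) := by
              apply mul_le_mul_of_nonneg_right _ hβ0
              linarith [hca]
            have h2 : q^3*a^2 < (a^2*q^3) * (q^3*a^2 - (a+1)*(a*q^2-1)) := by
              nlinarith [mul_lt_mul_of_pos_left hβ1 (show (0:ℝ) < a^2*q^3 by positivity)]
            linarith [h1, h2]
          · -- e = 1
            have ha3 : q^3 ≤ q ^ (2*(n-u-1)+1) := hmono 3 _ (by omega)
            have hbq : q ^ (2*(n-u)) = q ^ (2*(n-u-1)+1) * q := by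
              rw [show 2*(n-u) = (2*(n-u-1)+1) + 1 from by omega, zpow_add₀ hqne, zpow_one]
            have hca : (q ^ (2*(n-u-1)+1))^2 * q^2 ≤ q ^ (2*(u+1)) := by
              rw [ha2exp, ← zpow_natCast q 2, ← zpow_add₀ hqne]
              exact zpow_le_zpow_right₀ hq1.le (by omega)
            rw [hbq]
            set a := q ^ (2*(n-u-1)+1) with hadef
            have hβ1 : 1 < q^2*a^2 - (a+1)*(a*q-1) := by
              nlinarith [mul_pos (mul_pos ha0 (show (0:ℝ) < q - 1 by linarith))
                (show (0:ℝ) < a*q - 1 by nlinarith [ha3, hq1])]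
            have hβ0 : (0:ℝ) ≤ q^2*a^2 - (a+1)*(a*q-1) := by linarith
            have h1 : (a^2*q^2) * (q^2*a^2 - (a+1)*(a*q-1))
                ≤ q ^ (2*(u+1)) * (q^2*a^2 - (a+1)*(a*q-1)) := by
              apply mul_le_mul_of_nonneg_right _ hβ0
              linarith [hca]
            have h2 : q^2*a^2 < (a^2*q^2) * (q^2*a^2 - (a+1)*(a*q-1)) := by
              nlinarith [mul_lt_mul_of_pos_left hβ1 (show (0:ℝ) < a^2*q^2 by positivity)]
            linarith [h1, h2]
        · -- B2c : N ≥ 2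
          have hj2 : i + 2 ≤ j := by omega
          have hj2i : j ≤ 2*i + 1 := by omega
          by_cases hj3 : i + 3 ≤ j
          · -- N ≥ 3 : crude bounds a ≥ q^4, c ≥ q^8
            have ha4 : q^4 ≤ q ^ (2*(n-u-1)+e) := hmono 4 _ (by omega)
            have hc8 : q^8 ≤ q ^ (2*(u+1)) := hmono 8 _ (by omega)
            have hpolyG : (0:ℝ) ≤ q^8 - q^7 - q^3 - 1 := by
              nlinarith [mul_nonneg (by positivity : (0:ℝ) ≤ q^6) (by linarith : (0:ℝ) ≤ q^2 - 2),
                mul_nonneg (by positivity : (0:ℝ) ≤ q^5) (by linarith : (0:ℝ) ≤ q^2 - 2),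
                mul_nonneg (by positivity : (0:ℝ) ≤ q^4) (by linarith : (0:ℝ) ≤ q^2 - 2),
                mul_nonneg (by linarith : (0:ℝ) ≤ q) (by linarith : (0:ℝ) ≤ q^2 - 2),
                sq_nonneg (q^2 - q - 1)]
            have hpolyI : (0:ℝ) < q^5 - q^4 - 1 := by
              nlinarith [mul_nonneg (by positivity : (0:ℝ) ≤ q^3) (by linarith : (0:ℝ) ≤ q^2 - 2),
                mul_nonneg (by linarith : (0:ℝ) ≤ q) (by linarith : (0:ℝ) ≤ q^2 - 2),
                sq_nonneg (q^2 - q - 1)]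
            have h45 : (q^4+1) * q ^ (2*(u+1)) ≤ q^5 * (q ^ (2*(u+1)) - 1) := by
              linarith [mul_le_mul_of_nonneg_right hc8 hpolyI.le,
                mul_nonneg (by positivity : (0:ℝ) ≤ q^5) hpolyG]
            apply lt_of_mul_lt_mul_left _ (show (0:ℝ) ≤ q^4 by positivity)
            have hbc : (0:ℝ) ≤ (q ^ (2*(n-u)) - 1) * q ^ (2*(u+1)) :=
              mul_nonneg (by linarith) hc0.le
            have s1 : q^4 * ((q ^ (2*(n-u-1)+e) + 1) * (q ^ (2*(n-u)) - 1) * q ^ (2*(u+1)))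
                ≤ ((q^4+1) * q ^ (2*(n-u-1)+e)) * ((q ^ (2*(n-u)) - 1) * q ^ (2*(u+1))) := by
              linarith [mul_le_mul_of_nonneg_right
                (show q^4 * (q ^ (2*(n-u-1)+e) + 1) ≤ (q^4+1) * q ^ (2*(n-u-1)+e) by
                  linarith [ha4]) hbc]
            have s2 : ((q^4+1) * q ^ (2*(n-u-1)+e)) * ((q ^ (2*(n-u)) - 1) * q ^ (2*(u+1)))
                < q ^ (2*(n-u-1)+e) * q ^ (2*(n-u)) * ((q^4+1) * q ^ (2*(u+1))) := by
              linarith [mul_pos (mul_pos (show (0:ℝ) < q^4+1 by positivity) ha0) hc0]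
            have s3 : q ^ (2*(n-u-1)+e) * q ^ (2*(n-u)) * ((q^4+1) * q ^ (2*(u+1)))
                ≤ q ^ (2*(n-u-1)+e) * q ^ (2*(n-u)) * (q^5 * (q ^ (2*(u+1)) - 1)) :=
              mul_le_mul_of_nonneg_left h45 (by positivity)
            linarith [s1, s2, s3]
          · -- N = 2
            have hjeq : j = i + 2 := by omega
            interval_cases e
            · -- e = 0
              have ha2 : q^2 ≤ q ^ (2*(n-u-1)+0) := hmono 2 _ (by omega)
              have hbq : q ^ (2*(n-u)) = q ^ (2*(n-u-1)+0) * q^2 := by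
                rw [← zpow_natCast q 2, ← zpow_add₀ hqne]
                congr 1
                omega
              have hca : (q ^ (2*(n-u-1)+0))^2 * q ≤ q ^ (2*(u+1)) := by
                have h' : q ^ (4*(n-u-1)+2*0) * q ^ (1:ℤ) ≤ q ^ (2*(u+1)) := by
                  rw [← zpow_add₀ hqne]
                  exact zpow_le_zpow_right₀ hq1.le (by omega)
                rw [zpow_one] at h'
                rw [ha2exp]
                exact h'
              rw [hbq]
              set a := q ^ (2*(n-u-1)+0) with hadef
              have hpolyE : (0:ℝ) < q^7 - q^6 - q^4 + 1 := by
                nlinarith [mul_nonneg (by positivity : (0:ℝ) ≤ q^4) (by linarith : (0:ℝ) ≤ q^2 - 2),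
                  mul_nonneg (by positivity : (0:ℝ) ≤ q^3) (by linarith : (0:ℝ) ≤ q^2 - 2),
                  mul_nonneg (by positivity : (0:ℝ) ≤ q^5) (by linarith : (0:ℝ) ≤ q^2 - 2),
                  sq_nonneg (q^2 - q - 1), sq_nonneg (q^3 - q^2 - 1)]
              have hmon : q^2*(q-1)*(q^2*q^2 - q - 1) ≤ a*(q-1)*(a*q^2 - q - 1) := by
                nlinarith [mul_nonneg (mul_nonneg
                    (show (0:ℝ) ≤ q - 1 by linarith) (show (0:ℝ) ≤ a - q^2 by linarith))
                  (show (0:ℝ) ≤ q^2*(a + q^2) - (q+1) by nlinarith [ha2, hq2, hq1])]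
              have hβq : q^2 < q^3*a^2 - (a+1)*(a*q^2-1) := by
                linarith [hmon, hpolyE]
              have hβ0 : (0:ℝ) ≤ q^3*a^2 - (a+1)*(a*q^2-1) := by linarith [hβq, hq2]
              have h1 : (a^2*q) * (q^3*a^2 - (a+1)*(a*q^2-1))
                  ≤ q ^ (2*(u+1)) * (q^3*a^2 - (a+1)*(a*q^2-1)) := by
                apply mul_le_mul_of_nonneg_right _ hβ0
                linarith [hca]
              have h2 : (a^2*q)*q^2 < (a^2*q) * (q^3*a^2 - (a+1)*(a*q^2-1)) :=
                mul_lt_mul_of_pos_left hβq (by positivity)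
              linarith [h1, h2]
            · -- e = 1
              have ha3 : q^3 ≤ q ^ (2*(n-u-1)+1) := hmono 3 _ (by omega)
              have hbq : q ^ (2*(n-u)) = q ^ (2*(n-u-1)+1) * q := by
                rw [show 2*(n-u) = (2*(n-u-1)+1) + 1 from by omega, zpow_add₀ hqne, zpow_one]
              have hca : (q ^ (2*(n-u-1)+1))^2 ≤ q ^ (2*(u+1)) := by
                rw [ha2exp]
                exact zpow_le_zpow_right₀ hq1.le (by omega)
              rw [hbq]
              set a := q ^ (2*(n-u-1)+1) with hadef
              have hpolyJ : (0:ℝ) < q^8 - q^7 - q^4 + q^3 - q^2 + 1 := by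
                nlinarith [mul_nonneg (by positivity : (0:ℝ) ≤ q^6) (by linarith : (0:ℝ) ≤ q^2 - 2),
                  mul_nonneg (by positivity : (0:ℝ) ≤ q^5) (by linarith : (0:ℝ) ≤ q^2 - 2),
                  sq_nonneg (q^2 - q - 1)]
              have hmon : q^3*(q-1)*(q^3*q - 1) ≤ a*(q-1)*(a*q - 1) := by
                nlinarith [mul_nonneg (mul_nonneg
                    (show (0:ℝ) ≤ q - 1 by linarith) (show (0:ℝ) ≤ a - q^3 by linarith))
                  (show (0:ℝ) ≤ q*(a + q^3) - 1 by nlinarith [ha3, hq1])]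
              have hβq : q^2 < q^2*a^2 - (a+1)*(a*q-1) := by
                linarith [hmon, hpolyJ]
              have hβ0 : (0:ℝ) ≤ q^2*a^2 - (a+1)*(a*q-1) := by linarith [hβq, hq2]
              have h1 : (a^2) * (q^2*a^2 - (a+1)*(a*q-1))
                  ≤ q ^ (2*(u+1)) * (q^2*a^2 - (a+1)*(a*q-1)) :=
                mul_le_mul_of_nonneg_right hca hβ0
              have h2 : (a^2)*q^2 < (a^2) * (q^2*a^2 - (a+1)*(a*q-1)) :=
                mul_lt_mul_of_pos_left hβq (by positivity)
              linarith [h1, h2]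


set_option maxHeartbeats 1000000 in
lemma key2 (q : ℝ) (hq1 : 1 < q) (hq2 : 2 ≤ q^2) (n e i j u : ℤ)
    (he0 : 0 ≤ e) (he4 : e ≤ 4) (hn : 3 ≤ n) (hi : 0 ≤ i)
    (hu1 : i + 1 ≤ u) (huj : u ≤ j) (hjn : j ≤ n - 1)
    (hX : 2*i + 4*j + 7 ≤ 4*n + e) :
    q ^ (4*n + e - 8*u + 2*i - 3) * (q ^ (2*(u+1)) - 1)
      < (q ^ (2*(n-u-1)+e) + 1) * (q ^ (2*(n-u)) - 1) := by
  have hq0 : (0:ℝ) < q := lt_trans one_pos hq1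
  have hqne : q ≠ 0 := ne_of_gt hq0
  have hmono : ∀ (k : ℕ) (m : ℤ), (k:ℤ) ≤ m → (q:ℝ)^(k:ℕ) ≤ q ^ m := by
    intro k m hk
    rw [← zpow_natCast q k]
    exact zpow_le_zpow_right₀ hq1.le hk
  have ha0 : (0:ℝ) < q ^ (2*(n-u-1)+e) := zpow_pos hq0 _
  have hb0 : (0:ℝ) < q ^ (2*(n-u)) := zpow_pos hq0 _
  have hc0 : (0:ℝ) < q ^ (2*(u+1)) := zpow_pos hq0 _
  have hw0 : (0:ℝ) < q ^ (2*(u-i)-1) := zpow_pos hq0 _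
  have hcomb : q ^ (4*n + e - 8*u + 2*i - 3) * (q ^ (2*(u+1)) * q ^ (2*(u-i)-1))
      = q ^ (2*(n-u-1)+e) * q ^ (2*(n-u)) := by
    rw [← zpow_add₀ hqne, ← zpow_add₀ hqne, ← zpow_add₀ hqne]
    congr 1
    ring
  -- suffices multiplied form
  suffices H : q ^ (2*(n-u-1)+e) * q ^ (2*(n-u)) * (q ^ (2*(u+1)) - 1)
      < (q ^ (2*(n-u-1)+e) + 1) * (q ^ (2*(n-u)) - 1) * (q ^ (2*(u+1)) * q ^ (2*(u-i)-1)) by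
    have hcw : (0:ℝ) < q ^ (2*(u+1)) * q ^ (2*(u-i)-1) := mul_pos hc0 hw0
    rw [← hcomb] at H
    calc q ^ (4*n + e - 8*u + 2*i - 3) * (q ^ (2*(u+1)) - 1)
        = q ^ (4*n + e - 8*u + 2*i - 3) * (q ^ (2*(u+1)) * q ^ (2*(u-i)-1)) * (q ^ (2*(u+1)) - 1)
          / (q ^ (2*(u+1)) * q ^ (2*(u-i)-1)) := by field_simp
      _ < (q ^ (2*(n-u-1)+e) + 1) * (q ^ (2*(n-u)) - 1) := by
          rw [div_lt_iff₀ hcw]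
          calc q ^ (4*n + e - 8*u + 2*i - 3) * (q ^ (2*(u+1)) * q ^ (2*(u-i)-1)) * (q ^ (2*(u+1)) - 1)
              = q ^ (4*n + e - 8*u + 2*i - 3) * (q ^ (2*(u+1)) * q ^ (2*(u-i)-1)) * (q ^ (2*(u+1)) - 1) := rfl
            _ < (q ^ (2*(n-u-1)+e) + 1) * (q ^ (2*(n-u)) - 1) * (q ^ (2*(u+1)) * q ^ (2*(u-i)-1)) := H
  -- now the main work
  set a := q ^ (2*(n-u-1)+e) with hadef
  set b := q ^ (2*(n-u)) with hbdef
  set c := q ^ (2*(u+1)) with hcdef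
  set w := q ^ (2*(u-i)-1) with hwdef
  have ha1 : 1 ≤ a := by
    calc (1:ℝ) = q ^ (0:ℤ) := (zpow_zero q).symm
    _ ≤ a := zpow_le_zpow_right₀ hq1.le (by omega)
  have hwq : q ≤ w := by
    calc q = q ^ (1:ℤ) := (zpow_one q).symm
    _ ≤ w := zpow_le_zpow_right₀ hq1.le (by omega)
  have hpolyA : (0:ℝ) ≤ q^4 - q^3 - 1 := by
    nlinarith [sq_nonneg (q^2 - q - 1),
      mul_nonneg (by linarith : (0:ℝ) ≤ q + 1) (by linarith : (0:ℝ) ≤ q^2 - 2)]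
  by_cases hun : u ≤ n - 2
  · -- b ≥ q^4, w ≥ q : main case
    have hb4 : q^4 ≤ b := hmono 4 _ (by omega)
    have hbq : b ≤ q * (b - 1) := by
      nlinarith [mul_le_mul_of_nonneg_right hb4 (by linarith : (0:ℝ) ≤ q - 1), hpolyA, hq0]
    calc a * b * (c - 1) < a * b * c := by nlinarith [mul_pos ha0 hb0]
      _ ≤ a * (q * (b-1)) * c := by
          have : a * b ≤ a * (q * (b-1)) := mul_le_mul_of_nonneg_left hbq ha0.le
          exact mul_le_mul_of_nonneg_right this hc0.le
      _ < (a + 1) * (q * (b-1)) * c := by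
          have hqb1 : (0:ℝ) < q * (b-1) := by nlinarith [hb4, hq1, hq2]
          have := mul_pos hqb1 hc0
          nlinarith [this]
      _ = (a + 1) * (b - 1) * (c * q) := by ring
      _ ≤ (a + 1) * (b - 1) * (c * w) := by
          have h1 : (0:ℝ) < b - 1 := by nlinarith [hb4, hq1, hq2]
          have h2 : c * q ≤ c * w := mul_le_mul_of_nonneg_left hwq hc0.le
          have h3 : (0:ℝ) ≤ (a + 1) * (b - 1) := by positivity
          exact mul_le_mul_of_nonneg_left h2 h3
  · -- u = n - 1, so j = n - 1 = u
    have huval : u = n - 1 := by omega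
    have hju : j = u := by omega
    by_cases hij2 : i ≤ j - 2
    · -- w ≥ q^3, b ≥ q^2
      have hb2 : q^2 ≤ b := hmono 2 _ (by omega)
      have hw3 : q^3 ≤ w := by
        calc q^3 = q ^ ((3:ℕ):ℤ) := (zpow_natCast q 3).symm
        _ ≤ w := zpow_le_zpow_right₀ hq1.le (by omega)
      have hb1 : (0:ℝ) < b - 1 := by nlinarith [hb2, hq2]
      have hbq : b ≤ q^3 * (b - 1) := by
        have hp : (0:ℝ) < q^3 - q - 1 := by
          nlinarith [mul_nonneg (by linarith : (0:ℝ) ≤ q) (by linarith : (0:ℝ) ≤ q^2 - 2)]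
        nlinarith [mul_le_mul_of_nonneg_right hb2 (by nlinarith : (0:ℝ) ≤ q^3 - 1), hp,
          sq_nonneg q, hq0]
      calc a * b * (c - 1) < a * b * c := by nlinarith [mul_pos ha0 hb0]
        _ ≤ a * (q^3 * (b-1)) * c := by
            have : a * b ≤ a * (q^3 * (b-1)) := mul_le_mul_of_nonneg_left hbq ha0.le
            exact mul_le_mul_of_nonneg_right this hc0.le
        _ < (a + 1) * (q^3 * (b-1)) * c := by
            have hqb1 : (0:ℝ) < q^3 * (b-1) := by positivity
            nlinarith [mul_pos hqb1 hc0]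
        _ = (a + 1) * (b - 1) * (c * q^3) := by ring
        _ ≤ (a + 1) * (b - 1) * (c * w) := by
            have h2 : c * q^3 ≤ c * w := mul_le_mul_of_nonneg_left hw3 hc0.le
            have h3 : (0:ℝ) ≤ (a + 1) * (b - 1) := by positivity
            exact mul_le_mul_of_nonneg_left h2 h3
    · -- i = j - 1 : impossible
      exfalso
      omega

theorem stmt_7 (n s e : ℕ) (hn : 3 ≤ n) (hs : 2 ≤ s) (he : e ≤ 4)
    (i j : ℤ) (hi : 0 ≤ i) (hij : i < j) (hj : j ≤ (n:ℤ) - 1)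
    (h : delta n s e i = delta n s e j) :
    2 * (i:ℝ) + (j:ℝ) + 4 ≤ 2 * (n:ℝ) + (e:ℝ)/2 ∧
    2 * (n:ℝ) + (e:ℝ)/2 ≤ (i:ℝ) + 2 * (j:ℝ) + 3 := by
  have hs0 : (0:ℝ) < (s:ℝ) := by positivity
  have hs1 : (1:ℝ) < (s:ℝ) := by exact_mod_cast Nat.lt_of_lt_of_le one_lt_two hs
  have hs2 : (2:ℝ) ≤ (s:ℝ) := by exact_mod_cast hs
  set q : ℝ := (s:ℝ) ^ ((1:ℝ)/2) with hqdef
  have hq0 : 0 < q := Real.rpow_pos_of_pos hs0 _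
  have hqsq : q^2 = (s:ℝ) := by
    rw [hqdef, ← Real.rpow_natCast ((s:ℝ) ^ ((1:ℝ)/2)) 2, ← Real.rpow_mul hs0.le]
    norm_num
  have hq2 : 2 ≤ q^2 := by rw [hqsq]; exact hs2
  have hq1 : 1 < q := by nlinarith
  have ht : tval s e = q ^ ((e:ℕ):ℤ) := by
    rw [tval, zpow_natCast, hqdef, ← Real.rpow_natCast ((s:ℝ) ^ ((1:ℝ)/2)) e,
      ← Real.rpow_mul hs0.le]
    congr 1
    ring
  have hsz : ∀ m : ℤ, (s:ℝ) ^ m = q ^ (2*m) := by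
    intro m
    rw [zpow_mul, show q ^ (2:ℤ) = q^2 by rw [zpow_two, pow_two], hqsq]
  -- abbreviations
  set F : ℤ → ℝ := fun u => (s:ℝ) ^ ((n:ℤ) - u - 1) * tval s e + 1 with hF
  set G : ℤ → ℝ := fun u => (s:ℝ) ^ ((n:ℤ) - u) - 1 with hG
  set K : ℤ → ℝ := fun u => (s:ℝ) ^ (u + 1) - 1 with hK
  have hFpos : ∀ u : ℤ, 0 < F u := by
    intro u
    have h1 : 0 < (s:ℝ) ^ ((n:ℤ) - u - 1) := zpow_pos hs0 _
    have h2 : 0 < tval s e := Real.rpow_pos_of_pos hs0 _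
    simp only [hF]
    nlinarith
  have hGpos : ∀ u ∈ Finset.Icc (0:ℤ) j, 0 < G u := by
    intro u hu
    simp only [Finset.mem_Icc] at hu
    have : (1:ℝ) < (s:ℝ) ^ ((n:ℤ) - u) := by
      calc (1:ℝ) = (s:ℝ) ^ (0:ℤ) := by simp
      _ < (s:ℝ) ^ ((n:ℤ) - u) := zpow_lt_zpow_right₀ hs1 (by omega)
    simp only [hG]
    linarith
  have hKpos : ∀ u ∈ Finset.Icc (0:ℤ) j, 0 < K u := by
    intro u hu
    simp only [Finset.mem_Icc] at hu
    have : (1:ℝ) < (s:ℝ) ^ (u + 1) := by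
      calc (1:ℝ) = (s:ℝ) ^ (0:ℤ) := by simp
      _ < (s:ℝ) ^ (u+1) := zpow_lt_zpow_right₀ hs1 (by omega)
    simp only [hK]
    linarith
  -- the key product identity
  have hmem : ∀ u : ℤ, u ∈ Finset.Icc (i+1) j → u ∈ Finset.Icc (0:ℤ) j := by
    intro u hu
    simp only [Finset.mem_Icc] at hu ⊢
    omega
  have hmem0 : ∀ u : ℤ, u ∈ Finset.Icc (0:ℤ) i → u ∈ Finset.Icc (0:ℤ) j := by
    intro u hu
    simp only [Finset.mem_Icc] at hu ⊢
    omega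
  have E : (∏ u ∈ Finset.Icc (i+1) j, (F u * G u)) = ∏ u ∈ Finset.Icc (i+1) j, K u := by
    have h1 : delta n s e i = delta n s e j := h
    unfold delta at h1
    rw [prod_split (fun u => (s:ℝ) ^ ((n:ℤ) - u - 1) * tval s e + 1) i j hi hij.le,
        prod_split (fun u => (s:ℝ) ^ ((n:ℤ) - u) - 1) i j hi hij.le,
        prod_split (fun u => (s:ℝ) ^ (u + 1) - 1) i j hi hij.le] at h1
    have hP1 : 0 < ∏ u ∈ Finset.Icc (0:ℤ) i, F u :=
      Finset.prod_pos (fun u hu => hFpos u)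
    have hP2 : 0 < ∏ u ∈ Finset.Icc (i+1) j, F u :=
      Finset.prod_pos (fun u hu => hFpos u)
    have hQ1 : 0 < ∏ u ∈ Finset.Icc (0:ℤ) i, G u :=
      Finset.prod_pos (fun u hu => hGpos u (hmem0 u hu))
    have hQ2 : 0 < ∏ u ∈ Finset.Icc (i+1) j, G u :=
      Finset.prod_pos (fun u hu => hGpos u (hmem u hu))
    have hR1 : 0 < ∏ u ∈ Finset.Icc (0:ℤ) i, K u :=
      Finset.prod_pos (fun u hu => hKpos u (hmem0 u hu))
    have hR2 : 0 < ∏ u ∈ Finset.Icc (i+1) j, K u :=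
      Finset.prod_pos (fun u hu => hKpos u (hmem u hu))
    rw [div_eq_div_iff (ne_of_gt hR1) (ne_of_gt (mul_pos hR1 hR2))] at h1
    rw [Finset.prod_mul_distrib]
    have hne : (∏ u ∈ Finset.Icc (0:ℤ) i, F u) * (∏ u ∈ Finset.Icc (0:ℤ) i, G u)
        * (∏ u ∈ Finset.Icc (0:ℤ) i, K u) ≠ 0 := by positivity
    apply mul_left_cancel₀ hne
    simp only [hF, hG, hK] at h1 ⊢
    linear_combination -h1
  -- conversion to q powers
  have EFG : ∀ u ∈ Finset.Icc (i+1) j,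
      F u * G u = (q ^ (2*((n:ℤ)-u-1)+(e:ℤ)) + 1) * (q ^ (2*((n:ℤ)-u)) - 1) := by
    intro u hu
    simp only [hF, hG]
    rw [ht, hsz ((n:ℤ) - u - 1), hsz ((n:ℤ) - u), ← zpow_add₀ (ne_of_gt hq0)]
  have EK : ∀ u ∈ Finset.Icc (i+1) j, K u = q ^ (2*(u+1)) - 1 := by
    intro u hu
    simp only [hK]
    rw [hsz (u+1)]
  have Eq : (∏ u ∈ Finset.Icc (i+1) j,
        ((q ^ (2*((n:ℤ)-u-1)+(e:ℤ)) + 1) * (q ^ (2*((n:ℤ)-u)) - 1)))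
      = ∏ u ∈ Finset.Icc (i+1) j, (q ^ (2*(u+1)) - 1) := by
    rw [← Finset.prod_congr rfl EFG, ← Finset.prod_congr rfl EK]
    exact E
  have hLpos : ∀ u ∈ Finset.Icc (i+1) j,
      0 < (q ^ (2*((n:ℤ)-u-1)+(e:ℤ)) + 1) * (q ^ (2*((n:ℤ)-u)) - 1) := by
    intro u hu
    rw [← EFG u hu]
    exact mul_pos (hFpos u) (hGpos u (hmem u hu))
  have hRpos : 0 < ∏ u ∈ Finset.Icc (i+1) j, (q ^ (2*(u+1)) - 1) := by
    apply Finset.prod_pos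
    intro u hu
    rw [← EK u hu]
    exact hKpos u (hmem u hu)
  have hne : (Finset.Icc (i+1) j).Nonempty := Finset.nonempty_Icc.mpr (by omega)
  constructor
  · -- Goal 1
    by_contra hcon
    push_neg at hcon
    have hXr : ((4*(n:ℤ) + (e:ℤ) : ℤ) : ℝ) < ((4*i + 2*j + 8 : ℤ) : ℝ) := by
      push_cast
      linarith
    have hX : 4*(n:ℤ) + (e:ℤ) ≤ 4*i + 2*j + 7 := by
      have : (4*(n:ℤ) + (e:ℤ)) < 4*i + 2*j + 8 := by exact_mod_cast hXr
      omega
    have big : (∏ u ∈ Finset.Icc (i+1) j,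
          ((q ^ (2*((n:ℤ)-u-1)+(e:ℤ)) + 1) * (q ^ (2*((n:ℤ)-u)) - 1)))
        < ∏ u ∈ Finset.Icc (i+1) j,
            (q ^ (4*(n:ℤ) + (e:ℤ) - 4*u - 2*i - 5) * (q ^ (2*(u+1)) - 1)) := by
      apply Finset.prod_lt_prod_of_nonempty hLpos _ hne
      intro u hu
      simp only [Finset.mem_Icc] at hu
      exact key1 q hq1 hq2 (n:ℤ) (e:ℤ) i j u (by positivity) (by exact_mod_cast he)
        (by exact_mod_cast hn) hi hu.1 hu.2 hj hX
    have hsplit : ∏ u ∈ Finset.Icc (i+1) j,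
        (q ^ (4*(n:ℤ) + (e:ℤ) - 4*u - 2*i - 5) * (q ^ (2*(u+1)) - 1))
        = q ^ (∑ u ∈ Finset.Icc (i+1) j, (4*(n:ℤ) + (e:ℤ) - 4*u - 2*i - 5))
          * ∏ u ∈ Finset.Icc (i+1) j, (q ^ (2*(u+1)) - 1) := by
      rw [Finset.prod_mul_distrib, prod_zpow_eq (ne_of_gt hq0)]
    rw [hsplit] at big
    have hsum : ∑ u ∈ Finset.Icc (i+1) j, (4*(n:ℤ) + (e:ℤ) - 4*u - 2*i - 5)
        = (j-i)*(4*(n:ℤ) + (e:ℤ) - 2*i - 5) - 2*(j+i+1)*(j-i) := by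
      rw [Finset.sum_congr rfl (fun u _ => show 4*(n:ℤ) + (e:ℤ) - 4*u - 2*i - 5
          = (4*(n:ℤ) + (e:ℤ) - 2*i - 5) - 2*2*u by ring)]
      exact sum_linear _ 2 i j hij.le
    have hSle : ∑ u ∈ Finset.Icc (i+1) j, (4*(n:ℤ) + (e:ℤ) - 4*u - 2*i - 5) ≤ 0 := by
      rw [hsum]
      have h1 : (4*(n:ℤ) + (e:ℤ) - 2*i - 5) - 2*(j+i+1) ≤ 0 := by omega
      nlinarith [sub_pos.mpr hij]
    have hqS : q ^ (∑ u ∈ Finset.Icc (i+1) j, (4*(n:ℤ) + (e:ℤ) - 4*u - 2*i - 5)) ≤ 1 := by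
      calc q ^ (∑ u ∈ Finset.Icc (i+1) j, (4*(n:ℤ) + (e:ℤ) - 4*u - 2*i - 5))
          ≤ q ^ (0:ℤ) := zpow_le_zpow_right₀ hq1.le hSle
        _ = 1 := zpow_zero q
    have : (∏ u ∈ Finset.Icc (i+1) j,
          ((q ^ (2*((n:ℤ)-u-1)+(e:ℤ)) + 1) * (q ^ (2*((n:ℤ)-u)) - 1)))
        < ∏ u ∈ Finset.Icc (i+1) j, (q ^ (2*(u+1)) - 1) := by
      calc (∏ u ∈ Finset.Icc (i+1) j,
            ((q ^ (2*((n:ℤ)-u-1)+(e:ℤ)) + 1) * (q ^ (2*((n:ℤ)-u)) - 1)))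
          < q ^ (∑ u ∈ Finset.Icc (i+1) j, (4*(n:ℤ) + (e:ℤ) - 4*u - 2*i - 5))
            * ∏ u ∈ Finset.Icc (i+1) j, (q ^ (2*(u+1)) - 1) := big
        _ ≤ 1 * ∏ u ∈ Finset.Icc (i+1) j, (q ^ (2*(u+1)) - 1) :=
            mul_le_mul_of_nonneg_right hqS hRpos.le
        _ = ∏ u ∈ Finset.Icc (i+1) j, (q ^ (2*(u+1)) - 1) := one_mul _
    exact absurd Eq (ne_of_lt this)
  · -- Goal 2
    by_contra hcon
    push_neg at hcon
    have hXr : ((2*i + 4*j + 6 : ℤ) : ℝ) < ((4*(n:ℤ) + (e:ℤ) : ℤ) : ℝ) := by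
      push_cast
      linarith
    have hX : 2*i + 4*j + 7 ≤ 4*(n:ℤ) + (e:ℤ) := by
      have : (2*i + 4*j + 6 : ℤ) < 4*(n:ℤ) + (e:ℤ) := by exact_mod_cast hXr
      omega
    have big : (∏ u ∈ Finset.Icc (i+1) j,
          (q ^ (4*(n:ℤ) + (e:ℤ) - 8*u + 2*i - 3) * (q ^ (2*(u+1)) - 1)))
        < ∏ u ∈ Finset.Icc (i+1) j,
            ((q ^ (2*((n:ℤ)-u-1)+(e:ℤ)) + 1) * (q ^ (2*((n:ℤ)-u)) - 1)) := by
      apply Finset.prod_lt_prod_of_nonempty _ _ hne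
      · intro u hu
        simp only [Finset.mem_Icc] at hu
        have : (0:ℝ) < q ^ (2*(u+1)) - 1 := by
          have : (1:ℝ) < q ^ (2*(u+1)) := by
            calc (1:ℝ) = q ^ (0:ℤ) := (zpow_zero q).symm
            _ < q ^ (2*(u+1)) := zpow_lt_zpow_right₀ hq1 (by omega)
          linarith
        positivity
      · intro u hu
        simp only [Finset.mem_Icc] at hu
        exact key2 q hq1 hq2 (n:ℤ) (e:ℤ) i j u (by positivity) (by exact_mod_cast he)
          (by exact_mod_cast hn) hi hu.1 hu.2 hj hX
    have hsplit : ∏ u ∈ Finset.Icc (i+1) j,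
        (q ^ (4*(n:ℤ) + (e:ℤ) - 8*u + 2*i - 3) * (q ^ (2*(u+1)) - 1))
        = q ^ (∑ u ∈ Finset.Icc (i+1) j, (4*(n:ℤ) + (e:ℤ) - 8*u + 2*i - 3))
          * ∏ u ∈ Finset.Icc (i+1) j, (q ^ (2*(u+1)) - 1) := by
      rw [Finset.prod_mul_distrib, prod_zpow_eq (ne_of_gt hq0)]
    rw [hsplit] at big
    have hsum : ∑ u ∈ Finset.Icc (i+1) j, (4*(n:ℤ) + (e:ℤ) - 8*u + 2*i - 3)
        = (j-i)*(4*(n:ℤ) + (e:ℤ) + 2*i - 3) - 4*(j+i+1)*(j-i) := by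
      rw [Finset.sum_congr rfl (fun u _ => show 4*(n:ℤ) + (e:ℤ) - 8*u + 2*i - 3
          = (4*(n:ℤ) + (e:ℤ) + 2*i - 3) - 2*4*u by ring)]
      exact sum_linear _ 4 i j hij.le
    have hSge : 0 ≤ ∑ u ∈ Finset.Icc (i+1) j, (4*(n:ℤ) + (e:ℤ) - 8*u + 2*i - 3) := by
      rw [hsum]
      have h1 : 0 ≤ (4*(n:ℤ) + (e:ℤ) + 2*i - 3) - 4*(j+i+1) := by omega
      nlinarith [sub_pos.mpr hij]
    have hqS : 1 ≤ q ^ (∑ u ∈ Finset.Icc (i+1) j, (4*(n:ℤ) + (e:ℤ) - 8*u + 2*i - 3)) := by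
      calc (1:ℝ) = q ^ (0:ℤ) := (zpow_zero q).symm
        _ ≤ q ^ (∑ u ∈ Finset.Icc (i+1) j, (4*(n:ℤ) + (e:ℤ) - 8*u + 2*i - 3)) :=
            zpow_le_zpow_right₀ hq1.le hSge
    have : (∏ u ∈ Finset.Icc (i+1) j, (q ^ (2*(u+1)) - 1))
        < ∏ u ∈ Finset.Icc (i+1) j,
            ((q ^ (2*((n:ℤ)-u-1)+(e:ℤ)) + 1) * (q ^ (2*((n:ℤ)-u)) - 1)) := by
      calc (∏ u ∈ Finset.Icc (i+1) j, (q ^ (2*(u+1)) - 1))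
          = 1 * ∏ u ∈ Finset.Icc (i+1) j, (q ^ (2*(u+1)) - 1) := (one_mul _).symm
        _ ≤ q ^ (∑ u ∈ Finset.Icc (i+1) j, (4*(n:ℤ) + (e:ℤ) - 8*u + 2*i - 3))
            * ∏ u ∈ Finset.Icc (i+1) j, (q ^ (2*(u+1)) - 1) :=
            mul_le_mul_of_nonneg_right hqS hRpos.le
        _ < ∏ u ∈ Finset.Icc (i+1) j,
            ((q ^ (2*((n:ℤ)-u-1)+(e:ℤ)) + 1) * (q ^ (2*((n:ℤ)-u)) - 1)) := big
    exact absurd Eq (ne_of_gt this)
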